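/- Let n ≥ 1 and 1 ≤ p ≤ n-1. Then the maximum of the absolute values of the eigenvalues of M^p is 2^{2p/(2n-1)}, where M is the matrix of quantum multiplication by τ₁ on H•(OG(1,2n+1)). -/

import Mathlib

open Matrix Polynomial

/-- The matrix of quantum multiplication by τ₁ on H•(OG(1,2n+1)):
M[i+1][i] = 1 for 0 ≤ i ≤ 2n-2 except M[n][n-1] = 2, M[0][2n-2] = 1,
M[1][2n-1] = 1, all other entries zero. -/
def M (n : ℕ) : Matrix (Fin (2*n)) (Fin (2*n)) ℂ :=
  Matrix.of fun i j =>
    if (i : ℕ) = (j : ℕ) + 1 then (if (i : ℕ) = n then 2 else 1)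
    else if (i : ℕ) = 0 ∧ (j : ℕ) = 2*n - 2 then 1
    else if (i : ℕ) = 1 ∧ (j : ℕ) = 2*n - 1 then 1
    else 0

lemma Mzero {n : ℕ} {i j : Fin (2*n)} (h1 : (i:ℕ) ≠ (j:ℕ)+1) (h2 : ¬((i:ℕ) = 0 ∧ (j:ℕ) = 2*n-2))
    (h3 : ¬((i:ℕ) = 1 ∧ (j:ℕ) = 2*n-1)) : M n i j = 0 := by
  simp only [M, Matrix.of_apply]
  rw [if_neg h1, if_neg h2, if_neg h3]

lemma row0 {n : ℕ} (hn : 2 ≤ n) (v : Fin (2*n) → ℂ) :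
    (M n).mulVec v ⟨0, by omega⟩ = v ⟨2*n-2, by omega⟩ := by
  rw [Matrix.mulVec, dotProduct]
  rw [Finset.sum_eq_single (⟨2*n-2, by omega⟩ : Fin (2*n))]
  · have e : M n ⟨0, by omega⟩ ⟨2*n-2, by omega⟩ = 1 := by
      simp only [M, Matrix.of_apply, Fin.val_mk]
      split_ifs <;> first | rfl | omega | simp_all
    rw [e, one_mul]
  · intro b _ hb
    have hb' : (b : ℕ) ≠ 2*n-2 := fun h => hb (Fin.ext h)
    rw [Mzero (by simp only [Fin.val_mk]; omega) (by simp only [Fin.val_mk]; omega)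
      (by simp only [Fin.val_mk]; omega), zero_mul]
  · intro h; exact absurd (Finset.mem_univ _) h

lemma row1 {n : ℕ} (hn : 2 ≤ n) (v : Fin (2*n) → ℂ) :
    (M n).mulVec v ⟨1, by omega⟩ = v ⟨0, by omega⟩ + v ⟨2*n-1, by omega⟩ := by
  rw [Matrix.mulVec, dotProduct]
  have hsub : ({⟨0, by omega⟩, ⟨2*n-1, by omega⟩} : Finset (Fin (2*n))) ⊆ Finset.univ :=
    Finset.subset_univ _
  rw [← Finset.sum_subset hsub]
  · rw [Finset.sum_pair (by simp only [ne_eq, Fin.mk.injEq]; omega)]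
    have e1 : M n ⟨1, by omega⟩ ⟨0, by omega⟩ = 1 := by
      simp only [M, Matrix.of_apply, Fin.val_mk]
      split_ifs <;> first | rfl | omega | simp_all
    have e2 : M n ⟨1, by omega⟩ ⟨2*n-1, by omega⟩ = 1 := by
      simp only [M, Matrix.of_apply, Fin.val_mk]
      split_ifs <;> first | rfl | omega | simp_all
    rw [e1, e2, one_mul, one_mul]
  · intro b _ hb
    simp only [Finset.mem_insert, Finset.mem_singleton] at hb
    push_neg at hb
    obtain ⟨h1, h2⟩ := hb
    have hb1 : (b : ℕ) ≠ 0 := fun h => h1 (Fin.ext h)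
    have hb2 : (b : ℕ) ≠ 2*n-1 := fun h => h2 (Fin.ext h)
    rw [Mzero (by simp only [Fin.val_mk]; omega) (by simp only [Fin.val_mk]; omega)
      (by simp only [Fin.val_mk]; omega), zero_mul]

lemma rowi {n : ℕ} (v : Fin (2*n) → ℂ) (i : ℕ) (h2 : 2 ≤ i) (hi : i < 2*n) :
    (M n).mulVec v ⟨i, hi⟩ = (if i = n then 2 else 1) * v ⟨i-1, by omega⟩ := by
  rw [Matrix.mulVec, dotProduct]
  rw [Finset.sum_eq_single (⟨i-1, by omega⟩ : Fin (2*n))]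
  · have e : M n ⟨i, hi⟩ ⟨i-1, by omega⟩ = (if i = n then 2 else 1) := by
      simp only [M, Matrix.of_apply, Fin.val_mk]
      split_ifs <;> first | rfl | omega | simp_all
    rw [e]
  · intro b _ hb
    have hb' : (b : ℕ) ≠ i-1 := fun h => hb (Fin.ext h)
    rw [Mzero (by simp only [Fin.val_mk]; omega) (by simp only [Fin.val_mk]; omega)
      (by simp only [Fin.val_mk]; omega), zero_mul]
  · intro h; exact absurd (Finset.mem_univ _) h

lemma spec_iff {m : ℕ} (A : Matrix (Fin m) (Fin m) ℂ) (z : ℂ) :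
    z ∈ spectrum ℂ A ↔ ∃ v, v ≠ 0 ∧ A.mulVec v = z • v := by
  rw [spectrum.mem_iff, Matrix.isUnit_iff_isUnit_det, isUnit_iff_ne_zero, not_ne_iff,
      ← Matrix.exists_mulVec_eq_zero_iff]
  constructor
  · rintro ⟨v, hv, hv2⟩
    refine ⟨v, hv, ?_⟩
    rw [Algebra.algebraMap_eq_smul_one, Matrix.sub_mulVec, Matrix.smul_mulVec,
      Matrix.one_mulVec, sub_eq_zero] at hv2
    exact hv2.symm
  · rintro ⟨v, hv, hv2⟩
    refine ⟨v, hv, ?_⟩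
    rw [Algebra.algebraMap_eq_smul_one, Matrix.sub_mulVec, Matrix.smul_mulVec,
      Matrix.one_mulVec, sub_eq_zero, hv2]

lemma spec_constraint {n : ℕ} (hn : 2 ≤ n) {z : ℂ} (hz : z ∈ spectrum ℂ (M n)) :
    z = 0 ∨ z ^ (2*n-1) = 4 := by
  obtain ⟨v, hv0, hv⟩ := (spec_iff _ _).mp hz
  by_cases h0 : z = 0
  · exact Or.inl h0
  right
  have smul_app : ∀ (i : ℕ) (h : i < 2*n), (z • v) ⟨i, h⟩ = z * v ⟨i, h⟩ := fun i h => rfl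
  -- recurrence
  have key : ∀ i, 1 ≤ i → ∀ (h2 : i < 2*n),
      z^(i-1) * v ⟨i, h2⟩ = (if n ≤ i then 2 else 1) * v ⟨1, by omega⟩ := by
    intro i
    induction i with
    | zero => omega
    | succ k ih =>
      intro h1 h2
      rcases Nat.lt_or_ge k 1 with hk | hk
      · have hk0 : k = 0 := by omega
        subst hk0
        simp only [pow_zero, one_mul, Nat.add_sub_cancel]
        rw [if_neg (by omega), one_mul]
      · have hrow := rowi v (k+1) (by omega) h2
        rw [hv, smul_app] at hrow
        simp only [Nat.add_sub_cancel] at hrow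
        have hih := ih (by omega) (by omega)
        have hzk : z^k = z^(k-1) * z := by
          rw [← pow_succ]; congr 1; omega
        simp only [Nat.add_sub_cancel]
        rw [hzk]
        rcases Nat.lt_trichotomy (k+1) n with hc | hc | hc
        · rw [if_neg (by omega)] at hih ⊢
          rw [if_neg (by omega)] at hrow
          calc z ^ (k-1) * z * v ⟨k+1, h2⟩ = z^(k-1) * (z * v ⟨k+1, h2⟩) := by ring
            _ = z^(k-1) * (1 * v ⟨k, by omega⟩) := by rw [hrow]
            _ = z^(k-1) * v ⟨k, by omega⟩ := by ring
            _ = 1 * v ⟨1, by omega⟩ := hih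
        · rw [if_pos (by omega)]
          rw [if_neg (by omega)] at hih
          rw [if_pos (by omega)] at hrow
          calc z ^ (k-1) * z * v ⟨k+1, h2⟩ = z^(k-1) * (z * v ⟨k+1, h2⟩) := by ring
            _ = z^(k-1) * (2 * v ⟨k, by omega⟩) := by rw [hrow]
            _ = 2 * (z^(k-1) * v ⟨k, by omega⟩) := by ring
            _ = 2 * (1 * v ⟨1, by omega⟩) := by rw [hih]
            _ = 2 * v ⟨1, by omega⟩ := by ring
        · rw [if_pos (by omega)]
          rw [if_pos (by omega)] at hih
          rw [if_neg (by omega)] at hrow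
          calc z ^ (k-1) * z * v ⟨k+1, h2⟩ = z^(k-1) * (z * v ⟨k+1, h2⟩) := by ring
            _ = z^(k-1) * (1 * v ⟨k, by omega⟩) := by rw [hrow]
            _ = z^(k-1) * v ⟨k, by omega⟩ := by ring
            _ = 2 * v ⟨1, by omega⟩ := hih
  have ha := key (2*n-2) (by omega) (by omega)
  have hb := key (2*n-1) (by omega) (by omega)
  rw [if_pos (by omega)] at ha hb
  have h0r := row0 hn v
  rw [hv, smul_app] at h0r
  have h1r := row1 hn v
  rw [hv, smul_app] at h1r
  -- z^(2n-2) * v0 = 2 * v1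
  have hv0eq : z^(2*n-2) * v ⟨0, by omega⟩ = 2 * v ⟨1, by omega⟩ := by
    have e : z^(2*n-2) = z^(2*n-2-1) * z := by rw [← pow_succ]; congr 1; omega
    calc z^(2*n-2) * v ⟨0, by omega⟩ = z^(2*n-2-1) * (z * v ⟨0, by omega⟩) := by
          rw [e]; ring
      _ = z^(2*n-2-1) * v ⟨2*n-2, by omega⟩ := by rw [h0r]
      _ = 2 * v ⟨1, by omega⟩ := ha
  have hmain : z^(2*n-1) * v ⟨1, by omega⟩ = 4 * v ⟨1, by omega⟩ := by
    have e : z^(2*n-1) = z^(2*n-2) * z := by rw [← pow_succ]; congr 1; omega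
    calc z^(2*n-1) * v ⟨1, by omega⟩ = z^(2*n-2) * (z * v ⟨1, by omega⟩) := by
          rw [e]; ring
      _ = z^(2*n-2) * (v ⟨0, by omega⟩ + v ⟨2*n-1, by omega⟩) := by rw [h1r]
      _ = z^(2*n-2) * v ⟨0, by omega⟩ + z^(2*n-1-1) * v ⟨2*n-1, by omega⟩ := by
          have e2 : (2*n-1-1 : ℕ) = 2*n-2 := by omega
          rw [e2]; ring
      _ = 2 * v ⟨1, by omega⟩ + 2 * v ⟨1, by omega⟩ := by rw [hv0eq, hb]
      _ = 4 * v ⟨1, by omega⟩ := by ring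
  have hv1 : v ⟨1, by omega⟩ ≠ 0 := by
    intro hv1
    apply hv0
    funext j
    obtain ⟨j, hj⟩ := j
    rcases Nat.lt_or_ge j 1 with hj1 | hj1
    · have hj0 : j = 0 := by omega
      subst hj0
      have := hv0eq
      rw [hv1, mul_zero] at this
      exact (mul_eq_zero.mp this).resolve_left (pow_ne_zero _ h0)
    · have := key j hj1 hj
      rw [hv1, mul_zero] at this
      have := (mul_eq_zero.mp this).resolve_left (pow_ne_zero _ h0)
      simpa using this
  exact mul_right_cancel₀ hv1 hmain

lemma eig_exists {n : ℕ} (hn : 2 ≤ n) {z : ℂ} (h4 : z^(2*n-1) = 4) :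
    ∃ v : Fin (2*n) → ℂ, v ≠ 0 ∧ (M n).mulVec v = z • v := by
  set v : Fin (2*n) → ℂ :=
    fun j => if (j:ℕ) = 0 then 2 else (if n ≤ (j:ℕ) then 2 else 1) * z^(2*n-1-(j:ℕ)) with hvdef
  have vval : ∀ (i:ℕ) (h : i < 2*n),
      v ⟨i,h⟩ = if i = 0 then 2 else (if n ≤ i then 2 else 1) * z^(2*n-1-i) := fun i h => rfl
  have smul_app : ∀ (i : ℕ) (h : i < 2*n), (z • v) ⟨i, h⟩ = z * v ⟨i, h⟩ := fun i h => rfl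
  refine ⟨v, ?_, ?_⟩
  · intro h
    have h2 := congrFun h ⟨0, by omega⟩
    rw [vval, if_pos rfl] at h2
    simp at h2
  · funext j
    obtain ⟨k, hk⟩ := j
    rcases Nat.lt_or_ge k 1 with h1 | h1
    · have hk0 : k = 0 := by omega
      subst hk0
      rw [row0 hn v, smul_app, vval, vval, if_pos rfl,
        if_neg (show ¬(2*n-2 = 0) by omega), if_pos (show n ≤ 2*n-2 by omega),
        show 2*n-1-(2*n-2) = 1 by omega]
      ring
    rcases Nat.lt_or_ge k 2 with h2 | h2
    · have hk1 : k = 1 := by omega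
      subst hk1
      rw [row1 hn v, smul_app, vval, vval, vval, if_pos rfl,
        if_neg (show ¬(2*n-1 = 0) by omega), if_pos (show n ≤ 2*n-1 by omega),
        if_neg (show ¬((1:ℕ) = 0) by omega), if_neg (show ¬(n ≤ 1) by omega),
        show 2*n-1-(2*n-1) = 0 by omega]
      have e : z * (1 * z^(2*n-1-1)) = z^(2*n-1) := by
        rw [one_mul, ← pow_succ']; congr 1; omega
      rw [e, h4]
      norm_num
    · rw [rowi v k h2 hk, smul_app, vval, vval,
        if_neg (show ¬(k-1 = 0) by omega), if_neg (show ¬(k = 0) by omega)]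
      rcases Nat.lt_trichotomy k n with hc | hc | hc
      · rw [if_neg (show ¬(k = n) by omega), if_neg (show ¬(n ≤ k-1) by omega),
          if_neg (show ¬(n ≤ k) by omega)]
        have e : z^(2*n-1-(k-1)) = z^(2*n-1-k) * z := by rw [← pow_succ]; congr 1; omega
        rw [e]; ring
      · rw [if_pos (show k = n from hc), if_neg (show ¬(n ≤ k-1) by omega),
          if_pos (show n ≤ k by omega)]
        have e : z^(2*n-1-(k-1)) = z^(2*n-1-k) * z := by rw [← pow_succ]; congr 1; omega
        rw [e]; ring
      · rw [if_neg (show ¬(k = n) by omega), if_pos (show n ≤ k-1 by omega),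
          if_pos (show n ≤ k by omega)]
        have e : z^(2*n-1-(k-1)) = z^(2*n-1-k) * z := by rw [← pow_succ]; congr 1; omega
        rw [e]; ring

lemma pow_mulVec {m : ℕ} (A : Matrix (Fin m) (Fin m) ℂ) (z : ℂ) (v : Fin m → ℂ)
    (h : A.mulVec v = z • v) (p : ℕ) : (A^p).mulVec v = z^p • v := by
  induction p with
  | zero => simp
  | succ q ih =>
    rw [pow_succ, ← Matrix.mulVec_mulVec, h, Matrix.mulVec_smul, ih, smul_smul, pow_succ]
    ring_nf

theorem fpdim_low (n p : ℕ) (hn : 1 ≤ n) (hp1 : 1 ≤ p) (hp2 : p ≤ n - 1) :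
    IsGreatest {r : ℝ | ∃ z ∈ spectrum ℂ ((M n) ^ p), r = ‖z‖}
      ((2:ℝ) ^ ((2*p : ℝ) / (2*n - 1))) := by
  have hn2 : 2 ≤ n := by omega
  have hnR : (2:ℝ) ≤ (n:ℝ) := by exact_mod_cast hn2
  have hden : (2*(n:ℝ) - 1) ≠ 0 := by nlinarith
  set a : ℝ := 2 / (2*(n:ℝ) - 1) with ha
  set c : ℝ := (2:ℝ) ^ a with hcdef
  have hc0 : 0 < c := Real.rpow_pos_of_pos two_pos a
  have hcast : ((2*n-1 : ℕ) : ℝ) = 2*(n:ℝ) - 1 := by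
    push_cast [Nat.cast_sub (show 1 ≤ 2*n by omega)]
    ring
  have hpow : ∀ m : ℕ, c ^ m = (2:ℝ) ^ (a * m) := by
    intro m
    rw [hcdef, ← Real.rpow_natCast ((2:ℝ) ^ a) m, ← Real.rpow_mul (by norm_num : (0:ℝ) ≤ 2)]
  have hc4 : c ^ (2*n-1) = 4 := by
    rw [hpow, hcast, ha, div_mul_cancel₀ _ hden,
      show (2:ℝ) = ((2:ℕ):ℝ) by norm_num, Real.rpow_natCast]
    norm_num
  have hz4 : ((c:ℝ) : ℂ) ^ (2*n-1) = 4 := by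
    rw [← Complex.ofReal_pow, hc4]
    norm_num
  obtain ⟨v, hv0, hv⟩ := eig_exists hn2 hz4
  have hexp : a * (p:ℝ) = (2*p : ℝ) / (2*(n:ℝ) - 1) := by rw [ha]; ring
  constructor
  · refine ⟨(c:ℂ)^p, ?_, ?_⟩
    · rw [spec_iff]
      exact ⟨v, hv0, pow_mulVec _ _ _ hv p⟩
    · rw [norm_pow, Complex.norm_real, Real.norm_of_nonneg hc0.le, hpow, hexp]
  · rintro r ⟨w, hw, rfl⟩
    rw [spectrum.map_pow_of_pos (M n) (show 0 < p by omega)] at hw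
    obtain ⟨u, hu, rfl⟩ := hw
    rcases spec_constraint hn2 hu with h0 | h4
    · simp only [h0, zero_pow (show p ≠ 0 by omega), norm_zero]
      positivity
    · have habs : ‖u‖ ^ (2*n-1) = c ^ (2*n-1) := by
        rw [← norm_pow, h4, hc4]
        norm_num
      have hueq : ‖u‖ = c :=
        (pow_left_strictMonoOn₀ (show (2*n-1) ≠ 0 by omega)).injOn
          (norm_nonneg u) hc0.le habs
      simp only [norm_pow, hueq, hpow, hexp]
      exact le_refl _
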